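/- Let x = (x₁,...,x_n) and y = (y₁,...,y_n) be one-dimensional time-series (in ℝ) with nonzero consecutive differences. If all discrete signature coefficients ⟨Σ(x), Z^{a₁} ⊗ ⋯ ⊗ Z^{a_ℓ}⟩ and ⟨Σ(y), Z^{a₁} ⊗ ⋯ ⊗ Z^{a_ℓ}⟩ agree for all sequences of positive integers (a₁,...,a_ℓ), then the sequences of consecutive differences of x and y are equal; equivalently, x and y differ by a constant translation. -/

import Mathlib

open Finset

/-- Discrete signature coefficient of a one-dimensional time-series `x = (x₀, …, x_n)`
for the word `Z^{a₁} ⊗ ⋯ ⊗ Z^{a_ℓ}`. -/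
noncomputable def dsig1 {n ℓ : ℕ} (x : Fin (n + 1) → ℝ) (a : Fin ℓ → ℕ) : ℝ :=
  ∑ i ∈ Finset.univ.filter (fun i : Fin ℓ → Fin n => ∀ s t : Fin ℓ, s < t → i s < i t),
    ∏ k, (x (i k).succ - x (i k).castSucc) ^ a k

lemma strictMono_fin_self {n : ℕ} (f : Fin n → Fin n) (hf : StrictMono f) : f = id := by
  haveI i : WellFoundedLT (Fin n) := inferInstance
  have hsurj : Function.Surjective f :=
    Finite.surjective_of_injective hf.injective
  have hr : Set.range f = Set.range (id : Fin n → Fin n) := by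
    rw [Set.range_eq_univ.2 hsurj, Set.range_id]
  exact (StrictMono.range_inj hf strictMono_id).1 hr

lemma dsig1_full {n : ℕ} (x : Fin (n + 1) → ℝ) (a : Fin n → ℕ) :
    dsig1 x a = ∏ k, (x k.succ - x k.castSucc) ^ a k := by
  have h : (Finset.univ.filter (fun i : Fin n → Fin n => ∀ s t : Fin n, s < t → i s < i t))
      = {id} := by
    ext f
    simp only [mem_filter, mem_univ, true_and, mem_singleton]
    constructor
    · exact fun h => strictMono_fin_self f (fun s t hst => h s t hst)
    · rintro rfl; exact fun s t hst => hst
  rw [dsig1, h, Finset.sum_singleton]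
  rfl

/-- one-dimensional time-series with nonzero consecutive differences
and equal discrete signatures have equal difference sequences. -/
theorem dsig1_injective (n : ℕ) (x y : Fin (n + 1) → ℝ)
    (hx : ∀ j : Fin n, x j.succ - x j.castSucc ≠ 0)
    (hy : ∀ j : Fin n, y j.succ - y j.castSucc ≠ 0)
    (hsig : ∀ (ℓ : ℕ) (a : Fin ℓ → ℕ), (∀ k, 0 < a k) → dsig1 x a = dsig1 y a) :
    ∀ j : Fin n, x j.succ - x j.castSucc = y j.succ - y j.castSucc := by
  intro j
  set X : Fin n → ℝ := fun k => x k.succ - x k.castSucc with hX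
  set Y : Fin n → ℝ := fun k => y k.succ - y k.castSucc with hY
  have h1 : ∏ k, X k = ∏ k, Y k := by
    have := hsig n (fun _ => 1) (fun _ => one_pos)
    rw [dsig1_full, dsig1_full] at this
    simpa using this
  have hprodne : (∏ k, X k) ≠ 0 := Finset.prod_ne_zero_iff.2 fun k _ => hx k
  have h2 : X j * ∏ k, X k = Y j * ∏ k, Y k := by
    have := hsig n (fun k => if k = j then 2 else 1)
      (fun k => by split <;> norm_num)
    rw [dsig1_full, dsig1_full] at this
    have key : ∀ (Z : Fin n → ℝ),
        (∏ k, Z k ^ (if k = j then 2 else 1)) = Z j * ∏ k, Z k := by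
      intro Z
      have : ∀ k : Fin n, Z k ^ (if k = j then 2 else 1)
          = (if k = j then Z k else 1) * Z k := by
        intro k; split <;> ring
      rw [Finset.prod_congr rfl fun k _ => this k, Finset.prod_mul_distrib,
        Finset.prod_ite_eq' Finset.univ j Z]
      simp
    rw [key X, key Y] at this
    exact this
  rw [← h1] at h2
  exact mul_right_cancel₀ hprodne h2
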